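/- Let n ≥ 1 and l_0 ≥ 2 be integers, and let d_1 = 0 < d_2 < d_3 < ... < d_{l_0} = d be integers with d < n(n+1)/2. Then there exist integers k_2, k_3, ..., k_{l_0} with 0 ≤ k_l ≤ n−1 for each l such that d_l − d_{l−1} < Σ_{j=0}^{k_l} (n−j) for every l = 2,...,l_0, and Σ_{l=2}^{l_0} k_l < n. -/

import Mathlib

/-- If `n ≥ 1`, `l_0 ≥ 2`, and `d_1 = 0 < d_2 < ... < d_{l_0}` are integers with
`d_{l_0} < n(n+1)/2`, then there exist integers `k_2,...,k_{l_0}` with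
`0 ≤ k_l ≤ n-1`, `d_l − d_{l−1} < ∑_{j=0}^{k_l}(n−j)` for each `l = 2,...,l_0`, and
`∑_{l=2}^{l_0} k_l < n`. -/
theorem exists_k_of_small_codim (n l₀ : ℕ) (hn : 1 ≤ n) (hl₀ : 2 ≤ l₀)
    (d : ℕ → ℕ) (hd1 : d 1 = 0)
    (hmono : ∀ l, 2 ≤ l → l ≤ l₀ → d (l - 1) < d l)
    (hd : d l₀ < n * (n + 1) / 2) :
    ∃ k : ℕ → ℕ,
      (∀ l, 2 ≤ l → l ≤ l₀ →
        k l ≤ n - 1 ∧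
        d l - d (l - 1) < ∑ j ∈ Finset.range (k l + 1), (n - j)) ∧
      (∑ l ∈ Finset.Icc 2 l₀, k l) < n := by
  classical
  set g : ℕ → ℕ := fun m => ∑ j ∈ Finset.range m, (n - j) with hg
  -- value of g n
  have hgn : 2 * g n = n * (n + 1) := by
    have h1 : g n = ∑ j ∈ Finset.range n, (j + 1) := by
      rw [hg]
      simp only
      rw [← Finset.sum_range_reflect]
      apply Finset.sum_congr rfl
      intro j hj
      simp only [Finset.mem_range] at hj
      omega
    have h2 : (∑ i ∈ Finset.range n, i) * 2 = n * (n - 1) := Finset.sum_range_id_mul_two n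
    rw [h1, Finset.sum_add_distrib, Finset.sum_const, Finset.card_range, smul_eq_mul, mul_one]
    obtain ⟨m, rfl⟩ := Nat.exists_eq_add_of_le hn
    simp only [Nat.add_sub_cancel_left] at h2 ⊢
    nlinarith [h2]
  -- monotonicity of g
  have hgmono : Monotone g := by
    intro a b hab
    exact Finset.sum_le_sum_of_subset (Finset.range_subset_range.mpr hab)
  -- subadditivity of g
  have hgadd : ∀ a b, g (a + b) ≤ g a + g b := by
    intro a b
    rw [hg]
    simp only
    rw [Finset.sum_range_add]
    apply add_le_add_right
    apply Finset.sum_le_sum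
    intro j _
    omega
  -- monotonicity of d on [1, l₀]
  have hmono' : ∀ b, b ≤ l₀ → ∀ a, 1 ≤ a → a ≤ b → d a ≤ d b := by
    intro b
    induction b with
    | zero => intro _ a ha hab; omega
    | succ m ih =>
      intro hb a ha hab
      rcases Nat.eq_or_lt_of_le hab with rfl | h
      · exact le_refl _
      · have ham : a ≤ m := by omega
        have h1 := ih (by omega) a ha ham
        have h2 := hmono (m + 1) (by omega) hb
        simp only [Nat.add_sub_cancel] at h2
        omega
  -- g n > any increment
  have hdlt : ∀ l, 2 ≤ l → l ≤ l₀ → d l - d (l - 1) < g n := by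
    intro l h2 hl
    have h1 : d l ≤ d l₀ := hmono' l₀ le_rfl l (by omega) hl
    have : d l₀ < g n := by
      have hM : ∃ M, n * (n + 1) = M := ⟨_, rfl⟩
      obtain ⟨M, hM⟩ := hM
      rw [hM] at hd hgn
      omega
    omega
  -- existence of suitable k for each relevant l
  have hex : ∀ l, 2 ≤ l → l ≤ l₀ → ∃ m, d l - d (l - 1) < g (m + 1) := by
    intro l h2 hl
    refine ⟨n - 1, ?_⟩
    have : n - 1 + 1 = n := by omega
    rw [this]
    exact hdlt l h2 hl
  set k : ℕ → ℕ := fun l =>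
    if h : ∃ m, d l - d (l - 1) < g (m + 1) then Nat.find h else 0 with hk
  -- key properties of k on the relevant range
  have hkspec : ∀ l, 2 ≤ l → l ≤ l₀ → d l - d (l - 1) < g (k l + 1) := by
    intro l h2 hl
    have h := hex l h2 hl
    rw [hk]
    simp only [dif_pos h]
    exact Nat.find_spec h
  have hkle : ∀ l, 2 ≤ l → l ≤ l₀ → k l ≤ n - 1 := by
    intro l h2 hl
    have h := hex l h2 hl
    rw [hk]
    simp only [dif_pos h]
    apply Nat.find_le
    have : n - 1 + 1 = n := by omega
    rw [this]
    exact hdlt l h2 hl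
  have hkmin : ∀ l, 2 ≤ l → l ≤ l₀ → g (k l) ≤ d l - d (l - 1) := by
    intro l h2 hl
    have h := hex l h2 hl
    rw [hk]
    simp only [dif_pos h]
    rcases Nat.eq_zero_or_pos (Nat.find h) with h0 | h0
    · rw [h0]
      simp [hg]
    · obtain ⟨m, hm⟩ := Nat.exists_eq_succ_of_ne_zero (by omega : Nat.find h ≠ 0)
      rw [hm, Nat.succ_eq_add_one]
      have := Nat.find_min h (by omega : m < Nat.find h)
      omega
  -- superadditivity over the sum
  have hsumg : ∀ s : Finset ℕ, g (∑ l ∈ s, k l) ≤ ∑ l ∈ s, g (k l) := by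
    intro s
    induction s using Finset.induction_on with
    | empty => simp [hg]
    | @insert a s hx ih =>
      rw [Finset.sum_insert hx, Finset.sum_insert hx]
      calc g (k a + ∑ l ∈ s, k l) ≤ g (k a) + g (∑ l ∈ s, k l) := hgadd _ _
        _ ≤ g (k a) + ∑ l ∈ s, g (k l) := by omega
  -- telescoping
  have htel : ∀ m, 2 ≤ m → m ≤ l₀ → ∑ l ∈ Finset.Icc 2 m, (d l - d (l - 1)) = d m := by
    intro m hm
    induction m, hm using Nat.le_induction with
    | base =>
      intro _
      have h2 := hmono 2 le_rfl hl₀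
      simp at h2 ⊢
      omega
    | succ m hm ih =>
      intro hml
      rw [Finset.sum_Icc_succ_top (by omega : 2 ≤ m + 1), ih (by omega)]
      have h1 := hmono (m + 1) (by omega) hml
      simp only [Nat.add_sub_cancel] at h1 ⊢
      have h2 : d m ≤ d (m + 1) := le_of_lt h1
      omega
  refine ⟨k, fun l h2 hl => ⟨hkle l h2 hl, hkspec l h2 hl⟩, ?_⟩
  by_contra hcon
  push_neg at hcon
  have c1 : g n ≤ g (∑ l ∈ Finset.Icc 2 l₀, k l) := hgmono hcon
  have c2 := hsumg (Finset.Icc 2 l₀)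
  have c3 : ∑ l ∈ Finset.Icc 2 l₀, g (k l) ≤ ∑ l ∈ Finset.Icc 2 l₀, (d l - d (l - 1)) := by
    apply Finset.sum_le_sum
    intro l hls
    rw [Finset.mem_Icc] at hls
    exact hkmin l hls.1 hls.2
  have c4 := htel l₀ hl₀ le_rfl
  have c5 : g n ≤ d l₀ := by omega
  have hM : ∃ M, n * (n + 1) = M := ⟨_, rfl⟩
  obtain ⟨M, hM⟩ := hM
  rw [hM] at hd hgn
  omega
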